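/- arXiv:1808.00759 — 4 statements merged into one kernel-verified Lean document; each statement's English description precedes it below -/
import Mathlib

section
/- For any real number α > 0 and natural number p, the generalized binomial coefficient identity holds: C(2α, 2p) = Σ_{j=0}^{p} 2^{2j} · C(α, p+j) · C(p+j, 2j), where C(α, k) = α(α-1)···(α-k+1)/k! is the generalized binomial coefficient. -/
open Polynomial Finset

/-- Generalized binomial coefficient `C(x, k) = x(x-1)⋯(x-k+1)/k!`. -/
noncomputable def gchoose (x : ℝ) (k : ℕ) : ℝ :=
  (∏ i ∈ Finset.range k, (x - i)) / (Nat.factorial k)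

lemma prod_range_eq_descPochhammer (x : ℝ) (k : ℕ) :
    ∏ i ∈ Finset.range k, (x - i) = (descPochhammer ℝ k).eval x := by
  induction k with
  | zero => simp
  | succ k ih => rw [prod_range_succ, ih, descPochhammer_succ_right]; simp

lemma gchoose_nat (n k : ℕ) : gchoose (n : ℝ) k = n.choose k := by
  rw [gchoose, prod_range_eq_descPochhammer, descPochhammer_eval_eq_descFactorial,
    Nat.descFactorial_eq_factorial_mul_choose]
  push_cast
  rw [mul_comm, mul_div_assoc, div_self (by positivity), mul_one]


lemma natid (p n : ℕ) (h : 2 * p ≤ n) :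
    ((2 * n).choose (2 * p) : ℝ) =
      ∑ j ∈ Finset.range (p + 1),
        (2:ℝ) ^ (2*j) * (n.choose (p+j)) * ((p+j).choose (2*j)) := by
  have key : ((1 : ℝ[X]) + X) ^ (2 * n) = (X * (X + C 2) + (1:ℝ[X])) ^ n := by
    rw [pow_mul]
    exact congrArg (· ^ n) (by rw [map_ofNat]; ring)
  have hc : (((2*n).choose (2*p) : ℝ)) = ((X * (X + C 2) + (1:ℝ[X])) ^ n).coeff (2*p) := by
    rw [← key, coeff_one_add_X_pow]
  rw [add_pow] at hc
  simp only [one_pow, mul_one, finset_sum_coeff] at hc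
  have hterm : ∀ k, ((X * (X + C 2)) ^ k * ((n.choose k : ℕ) : ℝ[X])).coeff (2 * p)
      = (if k ≤ 2 * p then (2:ℝ) ^ (k - (2*p - k)) * (k.choose (2*p - k)) else 0)
        * (n.choose k) := by
    intro k
    rw [← C_eq_natCast, coeff_mul_C, mul_pow, mul_comm ((X:ℝ[X])^k), coeff_mul_X_pow',
      coeff_X_add_C_pow]
  simp only [hterm] at hc
  rw [hc]
  rw [← Finset.sum_subset ((fun k hk => by simp only [Finset.mem_Ico] at hk; exact Finset.mem_range.mpr (by omega)) :
      Finset.Ico p (2*p+1) ⊆ Finset.range (n+1)) ?_]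
  · rw [Finset.sum_Ico_eq_sum_range]
    have : 2*p + 1 - p = p + 1 := by omega
    rw [this]
    refine Finset.sum_congr rfl fun j hj => ?_
    have hj' : j ≤ p := by simpa [Nat.lt_succ_iff] using hj
    have h1 : p + j ≤ 2 * p := by omega
    have h2 : 2 * p - (p + j) = p - j := by omega
    have h3 : (p + j) - (p - j) = 2 * j := by omega
    have h4 : (p + j).choose (p - j) = (p + j).choose (2 * j) := by
      rw [show p - j = (p + j) - 2 * j by omega]
      exact Nat.choose_symm (by omega)
    rw [if_pos h1, h2, h3, h4]; ring
  · intro k hk hk'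
    simp only [Finset.mem_range, Finset.mem_Ico, not_and_or, not_le, not_lt] at hk hk'
    rcases hk' with hk' | hk'
    · rw [if_pos (by omega), Nat.choose_eq_zero_of_lt (by omega), Nat.cast_zero,
        mul_zero, zero_mul]
    · rw [if_neg (by omega), zero_mul]

theorem gchoose_two_alpha_identity (α : ℝ) (hα : 0 < α) (p : ℕ) :
    gchoose (2 * α) (2 * p) =
      ∑ j ∈ Finset.range (p + 1),
        (2 : ℝ) ^ (2 * j) * gchoose α (p + j) * ((p + j).choose (2 * j) : ℝ) := by
  set L : ℝ[X] := C ((((2*p).factorial : ℝ))⁻¹) * ∏ i ∈ Finset.range (2*p), (C 2 * X - C (i:ℝ))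
    with hL
  set R : ℝ[X] := ∑ j ∈ Finset.range (p+1),
      C ((2:ℝ)^(2*j) * (((p+j).factorial : ℝ))⁻¹ * (((p+j).choose (2*j)) : ℝ)) *
        ∏ i ∈ Finset.range (p+j), (X - C (i:ℝ)) with hR
  have hLe : ∀ x : ℝ, L.eval x = gchoose (2*x) (2*p) := by
    intro x
    simp [hL, gchoose, eval_prod, div_eq_inv_mul]
  have hRe : ∀ x : ℝ, R.eval x =
      ∑ j ∈ Finset.range (p + 1),
        (2 : ℝ) ^ (2 * j) * gchoose x (p + j) * ((p + j).choose (2 * j) : ℝ) := by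
    intro x
    simp only [hR, eval_finset_sum, eval_mul, eval_C, eval_prod, eval_sub, eval_X, eval_natCast]
    refine Finset.sum_congr rfl fun j _ => ?_
    rw [gchoose]
    ring
  have hLR : L = R := by
    apply Polynomial.eq_of_infinite_eval_eq
    apply Set.infinite_of_injective_forall_mem
      (f := fun m : ℕ => ((2*p + m : ℕ) : ℝ))
    · intro a b hab
      simpa using hab
    · intro m
      set n : ℕ := 2*p + m with hn
      show L.eval ((n : ℕ) : ℝ) = R.eval ((n : ℕ) : ℝ)
      rw [hLe, hRe]
      have h2n : (2 : ℝ) * (n : ℝ) = ((2*n : ℕ) : ℝ) := by push_cast; ring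
      rw [h2n, gchoose_nat, natid p n (by omega)]
      refine Finset.sum_congr rfl fun j _ => ?_
      rw [gchoose_nat]
  have := congrArg (Polynomial.eval α) hLR
  rwa [hLe, hRe] at this
end

section
/- Let λ > 0, 0 < α ≤ 1, and define P^α(k,t) = ((−1)^k / k!) Σ_{r=0}^{∞} ((−λ^α)^r t^r / r!) · Γ(rα+1)/Γ(rα−k+1) for k ∈ ℕ, t ≥ 0. Then the generating function Σ_{k=0}^{∞} P^α(k,t) s^k equals exp(−λ^α (1−s)^α t) for |s| ≤ 1. -/
open Real

open Finset

noncomputable def gb (β : ℝ) (k : ℕ) : ℝ :=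
  (∏ j ∈ Finset.range k, (β - j)) / (Nat.factorial k)

lemma gb_rec (β : ℝ) (k : ℕ) : ((k : ℝ) + 1) * gb β (k + 1) = (β - k) * gb β k := by
  have hk : (Nat.factorial k : ℝ) ≠ 0 := Nat.cast_ne_zero.2 (Nat.factorial_ne_zero k)
  simp only [gb, Finset.prod_range_succ, Nat.factorial_succ, Nat.cast_mul, Nat.cast_add,
    Nat.cast_one]
  field_simp


lemma gb_gamma (x : ℝ) (hx : 0 ≤ x) (k : ℕ) :
    Real.Gamma (x + 1) / Real.Gamma (x - k + 1) = ∏ j ∈ Finset.range k, (x - j) := by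
  induction k with
  | zero => simp [div_self (Real.Gamma_pos_of_pos (by linarith : (0:ℝ) < x + 1)).ne']
  | succ k ih =>
    rw [Finset.prod_range_succ, ← ih]
    have h1 : x - (k + 1 : ℕ) + 1 = x - k := by push_cast; ring
    rw [h1]
    rcases eq_or_ne x (k : ℝ) with h | h
    · simp [h, Real.Gamma_zero]
    · have hsub : x - k ≠ 0 := sub_ne_zero.2 h
      have h2 : Real.Gamma (x - k + 1) = (x - k) * Real.Gamma (x - k) :=
        Real.Gamma_add_one hsub
      rcases eq_or_ne (Real.Gamma (x - k)) 0 with h3 | h3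
      · rw [h3, div_zero, h2, h3, mul_zero, div_zero, zero_mul]
      · rw [h2]
        field_simp

lemma gb_abs_le {β : ℝ} (hβ : 0 ≤ β) {k : ℕ} (hk : ∀ j : ℕ, j < k → (j : ℝ) ≤ β) :
    |gb β k| ≤ (β + 1) ^ k / (Nat.factorial k) := by
  have h1 : |∏ j ∈ Finset.range k, (β - j)| ≤ (β + 1) ^ k := by
    rw [Finset.abs_prod]
    calc ∏ j ∈ Finset.range k, |β - (j:ℝ)|
        ≤ ∏ j ∈ Finset.range k, (β + 1) := by
          refine Finset.prod_le_prod (fun j _ => abs_nonneg _) (fun j hj => ?_)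
          have hj' := hk j (Finset.mem_range.1 hj)
          have hj0 : (0:ℝ) ≤ (j:ℝ) := Nat.cast_nonneg j
          rw [abs_of_nonneg (by linarith)]; linarith
      _ = (β + 1) ^ k := by rw [Finset.prod_const, Finset.card_range]
  rw [gb, abs_div, abs_of_nonneg (by positivity : (0:ℝ) ≤ (Nat.factorial k : ℝ))]
  exact div_le_div_of_nonneg_right h1 (by positivity) |>.trans_eq rfl

lemma gb_abs_step {β : ℝ} {n : ℕ} (h : β ≤ n) :
    ((n : ℝ) + 1) * |gb β (n + 1)| = ((n : ℝ) - β) * |gb β n| := by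
  have h2 : |((n : ℝ) + 1) * gb β (n + 1)| = |(β - n) * gb β n| := by rw [gb_rec]
  rw [abs_mul, abs_mul, abs_of_nonneg (by positivity : (0:ℝ) ≤ (n:ℝ)+1),
    abs_of_nonpos (by linarith : β - (n:ℝ) ≤ 0)] at h2
  linarith [h2]

lemma gb_telescope {β : ℝ} (hβ : 0 < β) {m : ℕ} (hm : β ≤ m) :
    ∀ n, m ≤ n →
      β * ∑ k ∈ Finset.Ico m n, |gb β k| + n * |gb β n| = m * |gb β m| := by
  intro n hn
  induction n, hn using Nat.le_induction with
  | base => simp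
  | succ n hn ih =>
    rw [Finset.sum_Ico_succ_top hn]
    have hβn : β ≤ n := hm.trans (by exact_mod_cast hn)
    have hstep := gb_abs_step hβn
    push_cast
    nlinarith [hstep, ih]

noncomputable def gbC (β : ℝ) : ℝ :=
  Real.exp (β + 1) + (β + 1) * Real.exp (β + 1) / β

lemma gb_head_le {β : ℝ} (hβ : 0 ≤ β) {k : ℕ} (hk : ∀ j : ℕ, j < k → (j : ℝ) ≤ β) :
    |gb β k| ≤ Real.exp (β + 1) := by
  refine (gb_abs_le hβ hk).trans ?_
  calc (β + 1) ^ k / (Nat.factorial k : ℝ)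
      ≤ ∑ i ∈ Finset.range (k + 1), (β + 1) ^ i / (Nat.factorial i : ℝ) := by
        refine Finset.single_le_sum (f := fun i => (β + 1) ^ i / (Nat.factorial i : ℝ))
          (fun i _ => by positivity) (Finset.self_mem_range_succ k)
    _ ≤ Real.exp (β + 1) := Real.sum_le_exp_of_nonneg (by linarith) _

lemma gb_sum_le {β : ℝ} (hβ : 0 < β) (n : ℕ) :
    ∑ k ∈ Finset.range n, |gb β k| ≤ gbC β := by
  set m := Nat.floor β + 1 with hm
  have hβm : β < m := by exact_mod_cast Nat.lt_floor_add_one β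
  have hjle : ∀ k : ℕ, k ≤ m → ∀ j : ℕ, j < k → (j : ℝ) ≤ β := by
    intro k hk j hj
    have h1 : j ≤ Nat.floor β := by omega
    exact (Nat.le_floor_iff hβ.le).1 h1
  have head : ∀ N, N ≤ m → ∑ k ∈ Finset.range N, |gb β k| ≤ Real.exp (β + 1) := by
    intro N hN
    calc ∑ k ∈ Finset.range N, |gb β k|
        ≤ ∑ k ∈ Finset.range N, (β + 1) ^ k / (Nat.factorial k : ℝ) :=
          Finset.sum_le_sum fun k hk =>
            gb_abs_le hβ.le (hjle k ((Finset.mem_range.1 hk).le.trans hN))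
      _ ≤ ∑ k ∈ Finset.range m, (β + 1) ^ k / (Nat.factorial k : ℝ) :=
          Finset.sum_le_sum_of_subset_of_nonneg
            (Finset.range_subset_range.2 hN) (fun k _ _ => by positivity)
      _ ≤ Real.exp (β + 1) := Real.sum_le_exp_of_nonneg (by linarith) _
  rcases le_or_gt n m with h | h
  · refine (head n h).trans ?_
    have hp : 0 ≤ (β + 1) * Real.exp (β + 1) / β := by positivity
    simp only [gbC]; linarith
  · have hsplit : ∑ k ∈ Finset.range n, |gb β k|
        = ∑ k ∈ Finset.range m, |gb β k| + ∑ k ∈ Finset.Ico m n, |gb β k| := by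
      exact (Finset.sum_range_add_sum_Ico _ h.le).symm
    have htel := gb_telescope hβ hβm.le n h.le
    have hgbm : |gb β m| ≤ Real.exp (β + 1) := gb_head_le hβ.le (hjle m le_rfl)
    have htail : ∑ k ∈ Finset.Ico m n, |gb β k| ≤ (β + 1) * Real.exp (β + 1) / β := by
      have hn0 : (0:ℝ) ≤ (n : ℝ) * |gb β n| := by positivity
      have hb1 : β * ∑ k ∈ Finset.Ico m n, |gb β k| ≤ (m:ℝ) * |gb β m| := by linarith
      have h2 : (m:ℝ) * |gb β m| ≤ (β + 1) * Real.exp (β + 1) := by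
        have habs : (0:ℝ) ≤ |gb β m| := abs_nonneg _
        have hmβ : (m : ℝ) ≤ β + 1 := by
          have := Nat.floor_le hβ.le
          push_cast [hm]; linarith
        nlinarith
      rw [le_div_iff₀ hβ]
      calc (∑ k ∈ Finset.Ico m n, |gb β k|) * β
          = β * ∑ k ∈ Finset.Ico m n, |gb β k| := by ring
        _ ≤ (m:ℝ) * |gb β m| := hb1
        _ ≤ (β + 1) * Real.exp (β + 1) := h2
    rw [hsplit, gbC]
    have hh := head m le_rfl
    linarith

lemma gb_beta_zero (k : ℕ) (hk : k ≠ 0) : gb 0 k = 0 := by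
  obtain ⟨m, rfl⟩ := Nat.exists_eq_succ_of_ne_zero hk
  have hp : (∏ j ∈ Finset.range (m+1), ((0:ℝ) - j)) = 0 :=
    Finset.prod_eq_zero (Finset.mem_range.2 (Nat.succ_pos m)) (by simp)
  simp only [gb, hp, zero_div]

lemma gb_abs_summable {β : ℝ} (hβ : 0 ≤ β) : Summable fun k => |gb β k| := by
  rcases hβ.eq_or_lt with h | h
  · refine summable_of_ne_finset_zero (s := {0}) fun k hk => ?_
    simp only [Finset.mem_singleton] at hk
    rw [← h, gb_beta_zero k hk, abs_zero]
  · exact summable_of_sum_range_le (fun n => abs_nonneg _) (gb_sum_le h)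

lemma gb_tsum_abs_le {β : ℝ} (hβ : 0 < β) : ∑' k, |gb β k| ≤ gbC β :=
  Summable.tsum_le_of_sum_range_le (gb_abs_summable hβ.le) (gb_sum_le hβ)

lemma gb_abs_bd {β : ℝ} (hβ : 0 ≤ β) (k : ℕ) : |gb β k| ≤ gbC β := by
  rcases hβ.eq_or_lt with h | h
  · subst h
    have h1 : |gb 0 k| ≤ 1 := by
      rcases Nat.eq_zero_or_pos k with rfl | hk
    
      · simp [gb]
      · rw [gb_beta_zero k hk.ne']; simp
    have : gbC 0 = Real.exp 1 := by simp [gbC]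
    rw [this]
    exact h1.trans (Real.one_le_exp (by norm_num))
  · calc |gb β k| ≤ ∑ i ∈ Finset.range (k+1), |gb β i| :=
        Finset.single_le_sum (f := fun i => |gb β i|) (fun i _ => abs_nonneg _)
          (Finset.self_mem_range_succ k)
      _ ≤ gbC β := gb_sum_le h _

lemma gb_mul_pow_summable {β : ℝ} (hβ : 0 ≤ β) {x : ℝ} (hx : |x| ≤ 1) :
    Summable fun k => gb β k * x ^ k := by
  refine Summable.of_abs (Summable.of_nonneg_of_le (fun k => abs_nonneg _)
    (fun k => ?_) (gb_abs_summable hβ))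
  rw [abs_mul, abs_pow]
  calc |gb β k| * |x| ^ k ≤ |gb β k| * 1 := by
        refine mul_le_mul_of_nonneg_left ?_ (abs_nonneg _)
        exact pow_le_one₀ (abs_nonneg x) hx
    _ = |gb β k| := mul_one _

lemma gb_tsum_eq_interior {β : ℝ} (hβ : 0 ≤ β) {x : ℝ} (hx : |x| < 1) :
    ∑' k, gb β k * x ^ k = (1 + x) ^ β := by
  set r : ℝ := (1 + |x|) / 2 with hr
  have hr0 : 0 < r := by positivity
  have hr1 : r < 1 := by rw [hr]; linarith
  have hxr : |x| < r := by rw [hr]; linarith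
  set t : Set ℝ := Metric.ball (0:ℝ) r with ht
  have htO : IsOpen t := Metric.isOpen_ball
  have htP : IsPreconnected t := (convex_ball (0:ℝ) r).isPreconnected
  have hmem : ∀ y ∈ t, |y| < r := by
    intro y hy
    simpa [Real.dist_eq] using Metric.mem_ball.1 hy
  have hmem1 : ∀ y ∈ t, 0 < 1 + y := by
    intro y hy
    have := abs_lt.1 (hmem y hy)
    linarith [this.1]
  set g : ℕ → ℝ → ℝ := fun k y => gb β k * y ^ k with hg_def
  set g' : ℕ → ℝ → ℝ := fun k y => gb β k * (k * y ^ (k - 1)) with hg'_def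
  set u : ℕ → ℝ := fun k => gbC β * ((k : ℝ) * r ^ (k - 1)) with hu_def
  have hC0 : 0 ≤ gbC β := (abs_nonneg _).trans (gb_abs_bd hβ 0)
  have hu : Summable u := by
    have h2 : Summable fun k : ℕ => ((k : ℝ) + 1) * r ^ k := by
      have ha := summable_pow_mul_geometric_of_norm_lt_one (R := ℝ) 1
        (r := r) (by rwa [Real.norm_eq_abs, abs_of_pos hr0])
      have hb := summable_geometric_of_lt_one hr0.le hr1
      have := (ha.add hb)
      refine this.congr fun k => ?_
      push_cast
      ring
    have h1 : Summable fun k : ℕ => (k : ℝ) * r ^ (k - 1) := by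
      rw [← summable_nat_add_iff 1]
      refine h2.congr fun k => ?_
      push_cast
      simp
    simpa [hu_def] using h1.mul_left (gbC β)
  have hg : ∀ (k : ℕ) (y : ℝ), y ∈ t → HasDerivAt (g k) (g' k y) y := by
    intro k y _
    simpa [hg_def, hg'_def] using (hasDerivAt_pow k y).const_mul (gb β k)
  have habs_g' : ∀ (k : ℕ) (y : ℝ), ‖g' k y‖ = |gb β k| * ((k:ℝ) * |y| ^ (k-1)) := by
    intro k y
    simp [hg'_def, Real.norm_eq_abs, abs_mul, abs_pow,
      abs_of_nonneg (Nat.cast_nonneg k : (0:ℝ) ≤ (k:ℝ))]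
  have hg'bd : ∀ (k : ℕ) (y : ℝ), |y| ≤ r → ‖g' k y‖ ≤ u k := by
    intro k y hy
    rw [habs_g', hu_def]
    have hky : |y| ^ (k - 1) ≤ r ^ (k - 1) := pow_le_pow_left₀ (abs_nonneg y) hy _
    have hbd : |gb β k| ≤ gbC β := gb_abs_bd hβ k
    have h0 : (0:ℝ) ≤ (k : ℝ) := Nat.cast_nonneg k
    exact mul_le_mul hbd (mul_le_mul_of_nonneg_left hky h0)
      (by positivity) hC0
  have hg' : ∀ (k : ℕ) (y : ℝ), y ∈ t → ‖g' k y‖ ≤ u k :=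
    fun k y hy => hg'bd k y (hmem y hy).le
  have hg0 : Summable fun k => g k 0 := gb_mul_pow_summable hβ (by norm_num)
  have h0t : (0:ℝ) ∈ t := by simp [ht, hr0]
  have HD : ∀ y ∈ t, HasDerivAt (fun z => ∑' k, g k z) (∑' k, g' k y) y :=
    fun y hy => hasDerivAt_tsum_of_isPreconnected hu htO htP hg hg' h0t hg0 hy
  set G : ℝ → ℝ := fun z => ∑' k, g k z with hG_def
  have hsum_g' : ∀ y ∈ t, Summable fun k => g' k y :=
    fun y hy => Summable.of_norm_bounded hu (fun k => hg' k y hy)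
  have key : ∀ y ∈ t, (1 + y) * (∑' k, g' k y) = β * G y := by
    intro y hy
    have hS := hsum_g' y hy
    have hshift : Summable fun k => g' (k+1) y := (summable_nat_add_iff 1).2 hS
    have hA : ∑' k, g' k y = ∑' k, gb β (k+1) * (((k:ℝ)+1) * y ^ k) := by
      rw [hS.tsum_eq_zero_add]
      rw [show g' 0 y = 0 by simp [hg'_def], zero_add]
      refine tsum_congr fun k => ?_
      simp only [hg'_def]
      push_cast
      simp
    have hyA : y * ∑' k, g' k y = ∑' k, gb β k * ((k:ℝ) * y ^ k) := by
      rw [← tsum_mul_left]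
      refine tsum_congr fun k => ?_
      rcases Nat.eq_zero_or_pos k with rfl | hk
      · simp [hg'_def]
      · simp only [hg'_def]
        have hyy : y * y ^ (k - 1) = y ^ k := by
          rw [← pow_succ']
          congr 1
          omega
        rw [← hyy]
        ring
    have hsum2 : Summable fun k => gb β (k+1) * (((k:ℝ)+1) * y ^ k) := by
      refine hshift.congr fun k => ?_
      simp only [hg'_def]
      push_cast
      simp
    have hsum3 : Summable fun k => gb β k * ((k:ℝ) * y ^ k) := by
      refine Summable.of_norm_bounded hu fun k => ?_
      have heq : ‖gb β k * ((k:ℝ) * y ^ k)‖ = |gb β k| * ((k:ℝ) * |y| ^ k) := by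
        simp [Real.norm_eq_abs, abs_mul, abs_pow,
          abs_of_nonneg (Nat.cast_nonneg k : (0:ℝ) ≤ (k:ℝ))]
      rw [heq, hu_def]
      have h1 : |y| ^ k ≤ r ^ k := pow_le_pow_left₀ (abs_nonneg y) (hmem y hy).le _
      have h1' : r ^ k ≤ r ^ (k - 1) :=
        pow_le_pow_of_le_one hr0.le hr1.le (Nat.sub_le k 1)
      have h2 : |gb β k| ≤ gbC β := gb_abs_bd hβ k
      exact mul_le_mul h2 (mul_le_mul_of_nonneg_left (h1.trans h1') (Nat.cast_nonneg k))
        (by positivity) hC0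
    calc (1 + y) * (∑' k, g' k y) = (∑' k, g' k y) + y * (∑' k, g' k y) := by ring
      _ = (∑' k, g' k y) + ∑' k, gb β k * ((k:ℝ) * y ^ k) := by rw [hyA]
      _ = (∑' k, gb β (k+1) * (((k:ℝ)+1) * y ^ k)) + ∑' k, gb β k * ((k:ℝ) * y ^ k) := by
          rw [hA]
      _ = ∑' k, (gb β (k+1) * (((k:ℝ)+1) * y ^ k) + gb β k * ((k:ℝ) * y ^ k)) :=
          (Summable.tsum_add hsum2 hsum3).symm
      _ = ∑' k, β * (gb β k * y ^ k) := by
          refine tsum_congr fun k => ?_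
          linear_combination y ^ k * gb_rec β k
      _ = β * G y := by rw [tsum_mul_left]
  set h : ℝ → ℝ := fun y => G y * (1 + y) ^ (-β) with hh_def
  have hderiv : ∀ y ∈ t, HasDerivAt h 0 y := by
    intro y hy
    have h1y : 0 < 1 + y := hmem1 y hy
    have d1 : HasDerivAt (fun z : ℝ => (1 + z) ^ (-β)) (1 * (-β) * (1 + y) ^ (-β - 1)) y :=
      ((hasDerivAt_id y).const_add 1).rpow_const (Or.inl h1y.ne')
    have dG : HasDerivAt G (∑' k, g' k y) y := HD y hy
    have dprod := dG.mul d1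
    have hsplit := Real.rpow_add h1y (-β - 1) 1
    rw [Real.rpow_one, show -β - 1 + 1 = -β by ring] at hsplit
    have hval : (∑' k, g' k y) * (1 + y) ^ (-β) + G y * (1 * (-β) * (1 + y) ^ (-β - 1)) = 0 := by
      rw [hsplit]
      linear_combination (1 + y) ^ (-β - 1) * key y hy
    rw [hval] at dprod
    exact dprod
  have hsub : Set.Icc (min x 0) (max x 0) ⊆ t := by
    intro y hy
    rw [ht, Metric.mem_ball, Real.dist_eq, sub_zero]
    rcases hy with ⟨h1, h2⟩
    rcases abs_lt.1 hxr with ⟨ha, hb⟩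
    rw [abs_lt]
    constructor
    · have hxm : -r < min x 0 := by
        rcases le_total x 0 with hc | hc
        · rw [min_eq_left hc]; linarith
        · rw [min_eq_right hc]; linarith
      linarith
    · have hxm : max x 0 < r := by
        rcases le_total x 0 with hc | hc
        · rw [max_eq_right hc]; linarith
        · rw [max_eq_left hc]; linarith
      linarith
  have hconst := constant_of_has_deriv_right_zero
    (f := h) (a := min x 0) (b := max x 0)
    (fun y hy => ((hderiv y (hsub hy)).continuousAt).continuousWithinAt)
    (fun y hy => ((hderiv y (hsub (Set.Ico_subset_Icc_self hy))).hasDerivWithinAt))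
  have hx_mem : x ∈ Set.Icc (min x 0) (max x 0) := ⟨min_le_left _ _, le_max_left _ _⟩
  have h0_mem : (0:ℝ) ∈ Set.Icc (min x 0) (max x 0) := ⟨min_le_right _ _, le_max_right _ _⟩
  have hx0 : h x = h 0 := by rw [hconst x hx_mem, hconst 0 h0_mem]
  have hG0 : G 0 = 1 := by
    have hzero : ∀ k : ℕ, k ≠ 0 → g k (0:ℝ) = 0 := fun k hk => by
      simp [hg_def, zero_pow hk]
    rw [show G 0 = ∑' k, g k 0 from rfl, tsum_eq_single 0 hzero]
    simp [hg_def, gb]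
  have hh0 : h 0 = 1 := by
    rw [show h 0 = G 0 * (1 + 0:ℝ) ^ (-β) from rfl, hG0]
    norm_num
  have h1x : 0 < 1 + x := by
    rcases abs_lt.1 hx with ⟨ha, _⟩
    linarith
  have hGx : G x * (1 + x) ^ (-β) = 1 := hx0.trans hh0
  have hrpow_pos : 0 < (1 + x) ^ (-β) := Real.rpow_pos_of_pos h1x _
  have h2 : (1 + x) ^ β * (1 + x) ^ (-β) = 1 := by
    rw [← Real.rpow_add h1x]
    simp
  have hfinal : G x = (1 + x) ^ β :=
    mul_right_cancel₀ hrpow_pos.ne' (hGx.trans h2.symm)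
  exact hfinal

lemma gb_tsum_eq {β : ℝ} (hβ : 0 ≤ β) {x : ℝ} (hx : |x| ≤ 1) :
    ∑' k, gb β k * x ^ k = (1 + x) ^ β := by
  rcases hβ.eq_or_lt with hβ0 | hβpos
  · subst hβ0
    rw [Real.rpow_zero]
    rw [tsum_eq_single 0 (fun k hk => by rw [gb_beta_zero k hk, zero_mul])]
    simp [gb]
  rcases lt_or_eq_of_le hx with hlt | heq
  · exact gb_tsum_eq_interior hβ hlt
  · have hIoo : Set.Ioo (0:ℝ) 1 ∈ nhdsWithin (1:ℝ) (Set.Iio 1) :=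
      Ioo_mem_nhdsLT_of_mem (by constructor <;> norm_num)
    rcases (abs_eq (by norm_num : (0:ℝ) ≤ 1)).1 heq with rfl | rfl
    · -- x = 1
      have hsumm : Summable fun k => gb β k := (gb_abs_summable hβ).of_abs
      have habel := Real.tendsto_tsum_powerSeries_nhdsWithin_lt
        (f := fun k => gb β k) hsumm.hasSum.tendsto_sum_nat
      have hcong : ∀ᶠ y in nhdsWithin (1:ℝ) (Set.Iio 1),
          (∑' n, gb β n * y ^ n) = (1 + y) ^ β := by
        filter_upwards [hIoo] with y hy
        exact gb_tsum_eq_interior hβ (by rw [abs_of_pos hy.1]; exact hy.2)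
      have hcont : Filter.Tendsto (fun y : ℝ => (1 + y) ^ β)
          (nhdsWithin (1:ℝ) (Set.Iio 1)) (nhds ((1 + 1) ^ β)) := by
        refine Filter.Tendsto.mono_left ?_ nhdsWithin_le_nhds
        exact ((Real.continuousAt_rpow_const (1+1) β (Or.inl (by norm_num))).comp
          ((continuous_const.add continuous_id).continuousAt))
      have := tendsto_nhds_unique (habel.congr' hcong) hcont
      simpa using this
    · -- x = -1
      have hsumm : Summable fun k => gb β k * (-1:ℝ) ^ k := gb_mul_pow_summable hβ (by norm_num)
      have habel := Real.tendsto_tsum_powerSeries_nhdsWithin_lt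
        (f := fun k => gb β k * (-1:ℝ) ^ k) hsumm.hasSum.tendsto_sum_nat
      have hcong : ∀ᶠ y in nhdsWithin (1:ℝ) (Set.Iio 1),
          (∑' n, gb β n * (-1:ℝ) ^ n * y ^ n) = (1 - y) ^ β := by
        filter_upwards [hIoo] with y hy
        have h1 : ∑' n, gb β n * (-1:ℝ) ^ n * y ^ n = ∑' n, gb β n * (-y) ^ n := by
          refine tsum_congr fun n => ?_
          rw [neg_pow y n]
          ring
        rw [h1, gb_tsum_eq_interior hβ (by rw [abs_neg, abs_of_pos hy.1]; exact hy.2)]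
        ring_nf
      have hcont : Filter.Tendsto (fun y : ℝ => (1 - y) ^ β)
          (nhdsWithin (1:ℝ) (Set.Iio 1)) (nhds (0:ℝ)) := by
        refine Filter.Tendsto.mono_left ?_ nhdsWithin_le_nhds
        have hc : ContinuousAt (fun z : ℝ => z ^ β) (1 - 1 : ℝ) := by
          rw [show (1:ℝ) - 1 = 0 by norm_num]
          exact Real.continuousAt_rpow_const 0 β (Or.inr hβ)
        have := hc.comp ((continuous_const.sub continuous_id).continuousAt (x := (1:ℝ)))
        have h0 : ((fun z : ℝ => z ^ β) ∘ fun y : ℝ => 1 - y) 1 = 0 := by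
          simp [Real.zero_rpow hβpos.ne']
        rw [ContinuousAt, h0] at this
        exact this
      have hl := tendsto_nhds_unique (habel.congr' hcong) hcont
      rw [show (1:ℝ) + -1 = 0 by norm_num, Real.zero_rpow hβpos.ne', ← hl]

lemma gb_tsum_abs_le' {β : ℝ} (hβ : 0 ≤ β) : ∑' k, |gb β k| ≤ gbC β := by
  rcases hβ.eq_or_lt with h | h
  · subst h
    rw [tsum_eq_single 0 (fun k hk => by rw [gb_beta_zero k hk, abs_zero])]
    have h1 : |gb 0 0| = 1 := by simp [gb]
    have h2 : gbC 0 = Real.exp 1 := by simp [gbC]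
    rw [h1, h2]
    exact Real.one_le_exp (by norm_num)
  · exact gb_tsum_abs_le h

lemma gb_abs_mul_pow_summable {β : ℝ} (hβ : 0 ≤ β) {x : ℝ} (hx : |x| ≤ 1) :
    Summable fun k => |gb β k| * |x| ^ k := by
  refine Summable.of_nonneg_of_le (fun k => by positivity) (fun k => ?_) (gb_abs_summable hβ)
  calc |gb β k| * |x| ^ k ≤ |gb β k| * 1 :=
        mul_le_mul_of_nonneg_left (pow_le_one₀ (abs_nonneg x) hx) (abs_nonneg _)
    _ = |gb β k| := mul_one _

lemma nat_add_one_le_two_pow (r : ℕ) : ((r : ℝ) + 1) ≤ 2 ^ r := by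
  have := @Nat.lt_two_pow_self r
  have : (r : ℕ) + 1 ≤ 2 ^ r := this
  exact_mod_cast this

/-- PMF of the space-fractional Poisson process. -/
noncomputable def sfppPMF (lam α : ℝ) (k : ℕ) (t : ℝ) : ℝ :=
  ((-1 : ℝ) ^ k / (Nat.factorial k)) *
    ∑' r : ℕ, ((-(lam ^ α)) ^ r * t ^ r / (Nat.factorial r)) *
      (Real.Gamma (r * α + 1) / Real.Gamma (r * α - k + 1))

theorem sfpp_pgf (lam α t s : ℝ) (hlam : 0 < lam) (hα0 : 0 < α) (hα1 : α ≤ 1)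
    (ht : 0 ≤ t) (hs : |s| ≤ 1) :
    ∑' k : ℕ, sfppPMF lam α k t * s ^ k =
      Real.exp (-(lam ^ α) * (1 - s) ^ α * t) := by
  have hq0 : 0 < lam ^ α := Real.rpow_pos_of_pos hlam α
  have h1s : 0 ≤ 1 - s := by have := (abs_le.1 hs).2; linarith
  have hms : |(-s)| ≤ 1 := by rwa [abs_neg]
  have hra : ∀ r : ℕ, 0 ≤ (r : ℝ) * α := fun r => mul_nonneg (Nat.cast_nonneg r) hα0.le
  set c : ℕ → ℝ := fun r => (-(lam ^ α)) ^ r * t ^ r / (Nat.factorial r) with hc_def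
  set F : ℕ → ℕ → ℝ := fun r k => c r * gb ((r:ℝ) * α) k * (-s) ^ k with hF_def
  set P : ℕ → ℝ := fun r => (lam ^ α * t) ^ r / (Nat.factorial r) with hP_def
  have hP0 : ∀ r, 0 ≤ P r := fun r => by
    rw [hP_def]; positivity
  have habs_c : ∀ r, |c r| = P r := by
    intro r
    rw [hc_def, hP_def]
    rw [abs_div, abs_mul, abs_pow, abs_pow, abs_neg,
      abs_of_pos hq0, abs_of_nonneg ht,
      abs_of_nonneg (by positivity : (0:ℝ) ≤ (Nat.factorial r : ℝ)), ← mul_pow]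
  have habsF : ∀ r k, |F r k| = P r * (|gb ((r:ℝ)*α) k| * |s| ^ k) := by
    intro r k
    rw [hF_def]
    simp only [abs_mul, abs_pow, abs_neg, habs_c]
    ring
  -- Step A : rewrite each summand of the outer sum
  have hstepA : ∀ k : ℕ, sfppPMF lam α k t * s ^ k = ∑' r, F r k := by
    intro k
    have hkfac : (Nat.factorial k : ℝ) ≠ 0 := Nat.cast_ne_zero.2 (Nat.factorial_ne_zero k)
    rw [sfppPMF]
    have hinner : (∑' r : ℕ, ((-(lam ^ α)) ^ r * t ^ r / (Nat.factorial r)) *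
          (Real.Gamma (r * α + 1) / Real.Gamma (r * α - k + 1)))
        = (∑' r : ℕ, c r * gb ((r:ℝ) * α) k) * (Nat.factorial k : ℝ) := by
      rw [← tsum_mul_right]
      refine tsum_congr fun r => ?_
      rw [gb_gamma ((r:ℝ)*α) (hra r) k, gb, hc_def]
      field_simp
    rw [hinner]
    have halg : ((-1:ℝ) ^ k / (Nat.factorial k)) *
        ((∑' r : ℕ, c r * gb ((r:ℝ) * α) k) * (Nat.factorial k : ℝ)) * s ^ k
        = (∑' r : ℕ, c r * gb ((r:ℝ) * α) k) * (-s) ^ k := by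
      rw [neg_pow s k]
      generalize (∑' r : ℕ, c r * gb ((r:ℝ) * α) k) = S
      field_simp
    rw [halg, ← tsum_mul_right]
  -- summability of |F| over the product
  have hslice : ∀ r, Summable fun k => |F r k| := by
    intro r
    refine Summable.congr ((gb_abs_mul_pow_summable (hra r) hs).mul_left (P r)) fun k => ?_
    rw [habsF]
  have htsum_slice_le : ∀ r, (∑' k, |F r k|) ≤ P r * (gbC ((r:ℝ)*α) + 1) := by
    intro r
    have h1 : (∑' k, |F r k|) = P r * ∑' k, |gb ((r:ℝ)*α) k| * |s| ^ k := by
      rw [← tsum_mul_left]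
      exact tsum_congr fun k => habsF r k
    rw [h1]
    refine mul_le_mul_of_nonneg_left ?_ (hP0 r)
    calc (∑' k, |gb ((r:ℝ)*α) k| * |s| ^ k) ≤ ∑' k, |gb ((r:ℝ)*α) k| := by
          refine Summable.tsum_le_tsum (fun k => ?_) (gb_abs_mul_pow_summable (hra r) hs)
            (gb_abs_summable (hra r))
          calc |gb ((r:ℝ)*α) k| * |s| ^ k ≤ |gb ((r:ℝ)*α) k| * 1 :=
                mul_le_mul_of_nonneg_left (pow_le_one₀ (abs_nonneg s) hs) (abs_nonneg _)
            _ = |gb ((r:ℝ)*α) k| := mul_one _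
      _ ≤ gbC ((r:ℝ)*α) := gb_tsum_abs_le' (hra r)
      _ ≤ gbC ((r:ℝ)*α) + 1 := by linarith
  -- the dominating series
  set y : ℝ := lam ^ α * t * Real.exp 1 with hy_def
  have hy0 : 0 ≤ y := by rw [hy_def]; positivity
  set D : ℕ → ℝ := fun r => Real.exp 1 * (y ^ r / (Nat.factorial r))
      + (Real.exp 1 / α) * (((r:ℝ) + 1) * y ^ r / (Nat.factorial r))
      + (lam ^ α * t) ^ r / (Nat.factorial r) with hD_def
  have hD_summable : Summable D := by
    have h1 : Summable fun r : ℕ => Real.exp 1 * (y ^ r / (Nat.factorial r)) :=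
      (Real.summable_pow_div_factorial y).mul_left _
    have h2 : Summable fun r : ℕ => (Real.exp 1 / α) * (((r:ℝ) + 1) * y ^ r / (Nat.factorial r)) := by
      refine Summable.mul_left _ ?_
      refine Summable.of_nonneg_of_le (fun r => by positivity) (fun r => ?_)
        (Real.summable_pow_div_factorial (2 * y))
      have h2p := nat_add_one_le_two_pow r
      have hyr : (0:ℝ) ≤ y ^ r := by positivity
      have hfac : (0:ℝ) < (Nat.factorial r : ℝ) := by positivity
      have hmp : (2 * y) ^ r = 2 ^ r * y ^ r := mul_pow 2 y r
      have hnum : ((r:ℝ) + 1) * y ^ r ≤ (2 * y) ^ r := by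
        rw [hmp]
        exact mul_le_mul_of_nonneg_right h2p hyr
      exact (div_le_div_iff_of_pos_right hfac).2 hnum
    have h3 : Summable fun r : ℕ => (lam ^ α * t) ^ r / (Nat.factorial r) :=
      Real.summable_pow_div_factorial _
    exact (h1.add h2).add h3
  have hPC_le_D : ∀ r, P r * (gbC ((r:ℝ)*α) + 1) ≤ D r := by
    intro r
    have hexp_le : Real.exp ((r:ℝ)*α + 1) ≤ Real.exp ((r:ℝ) + 1) := by
      refine Real.exp_le_exp.2 ?_
      have : (r:ℝ) * α ≤ (r:ℝ) * 1 := mul_le_mul_of_nonneg_left hα1 (Nat.cast_nonneg r)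
      linarith [this]
    have hCle : gbC ((r:ℝ)*α) ≤ Real.exp ((r:ℝ)+1) * (1 + ((r:ℝ)+1)/α) := by
      rw [gbC]
      rcases Nat.eq_zero_or_pos r with rfl | hr
      · simp only [Nat.cast_zero, zero_mul, zero_add, div_zero, add_zero]
        have h1 : (0:ℝ) ≤ Real.exp 1 * (1/α) := by positivity
        have : Real.exp (0+1 : ℝ) = Real.exp ((0:ℝ)+1) := rfl
        nlinarith [Real.exp_pos (1:ℝ), (by positivity : (0:ℝ) < 1/α)]
      · have hrα : α ≤ (r:ℝ) * α := by
          have : (1:ℝ) ≤ (r:ℝ) := by exact_mod_cast hr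
          nlinarith
        have htail : ((r:ℝ)*α + 1) * Real.exp ((r:ℝ)*α + 1) / ((r:ℝ)*α)
            ≤ ((r:ℝ)+1) * Real.exp ((r:ℝ)+1) / α := by
          refine div_le_div₀ (by positivity) ?_ hα0 hrα
          refine mul_le_mul ?_ hexp_le (Real.exp_pos _).le (by positivity)
          have : (r:ℝ) * α ≤ (r:ℝ) := by nlinarith [Nat.cast_nonneg (α := ℝ) r]
          linarith
        calc Real.exp ((r:ℝ)*α + 1) + ((r:ℝ)*α + 1) * Real.exp ((r:ℝ)*α + 1) / ((r:ℝ)*α)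
            ≤ Real.exp ((r:ℝ)+1) + ((r:ℝ)+1) * Real.exp ((r:ℝ)+1) / α := by
              exact add_le_add hexp_le htail
          _ = Real.exp ((r:ℝ)+1) * (1 + ((r:ℝ)+1)/α) := by ring
    have hexp_split : Real.exp ((r:ℝ)+1) = Real.exp (r:ℝ) * Real.exp 1 := Real.exp_add _ _
    have hre : Real.exp 1 ^ r = Real.exp (r : ℝ) := by
      rw [← Real.exp_nat_mul]; norm_num
    have hD_eq : D r = P r * (Real.exp ((r:ℝ)+1) * (1 + ((r:ℝ)+1)/α) + 1) := by
      simp only [hD_def, hP_def, hy_def]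
      have hy_pow : (lam ^ α * t * Real.exp 1) ^ r = (lam ^ α * t) ^ r * Real.exp (r:ℝ) := by
        rw [mul_pow, hre]
      rw [hy_pow, hexp_split]
      field_simp
    rw [hD_eq]
    refine mul_le_mul_of_nonneg_left ?_ (hP0 r)
    linarith
  have habs_prod : Summable fun p : ℕ × ℕ => |F p.1 p.2| := by
    refine (summable_prod_of_nonneg (fun p => abs_nonneg _)).2 ⟨fun r => hslice r, ?_⟩
    refine Summable.of_nonneg_of_le (fun r => tsum_nonneg (fun k => abs_nonneg _))
      (fun r => (htsum_slice_le r).trans (hPC_le_D r)) hD_summable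
  have hunc : Summable (Function.uncurry F) := by
    refine Summable.of_abs ?_
    exact habs_prod
  -- swap the sums
  have hswap : ∑' k, ∑' r, F r k = ∑' r, ∑' k, F r k := Summable.tsum_comm hunc
  rw [tsum_congr hstepA, hswap]
  -- evaluate inner sums
  have hstepC : ∀ r : ℕ, (∑' k, F r k) = (-(lam ^ α) * (1 - s) ^ α * t) ^ r / (Nat.factorial r) := by
    intro r
    have h1 : (∑' k, F r k) = c r * ∑' k, gb ((r:ℝ)*α) k * (-s) ^ k := by
      rw [← tsum_mul_left]
      exact tsum_congr fun k => by rw [hF_def]; ring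
    rw [h1, gb_tsum_eq (hra r) hms]
    have h2 : (1 + -s) = 1 - s := by ring
    rw [h2]
    have h3 : (1 - s) ^ ((r:ℝ) * α) = ((1 - s) ^ α) ^ r := by
      rw [mul_comm ((r:ℝ)) α, Real.rpow_mul h1s, Real.rpow_natCast]
    rw [h3, hc_def]
    rw [mul_pow, mul_pow]
    field_simp
  rw [tsum_congr hstepC]
  rw [Real.exp_eq_exp_ℝ, NormedSpace.exp_eq_tsum_div]
end

section
/- Let a, b > 0, c ∈ ℝ, and η ∈ ℝ. The Laplace transform of t ↦ t^{b−1} M^c_{a,b}(−η t^a) equals s ↦ s^{ac−b}/(s^a + η)^c for sufficiently large real s, where M^c_{a,b}(z) = Σ_{n=0}^{∞} (c)_n z^n / (Γ(an+b) n!) is the generalized (Prabhakar) Mittag-Leffler function and (c)_n is the Pochhammer symbol. -/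
open Real MeasureTheory

section PrabhakarAux

open Filter Set


lemma poch_succ (c : ℝ) (n : ℕ) :
    (ascPochhammer ℝ (n+1)).eval c = (ascPochhammer ℝ n).eval c * (c + n) :=
  ascPochhammer_succ_eval n c

lemma poch_succ_left (c : ℝ) (n : ℕ) :
    (ascPochhammer ℝ (n+1)).eval c = c * (ascPochhammer ℝ n).eval (c + 1) := by
  rw [ascPochhammer_succ_left]
  simp [Polynomial.eval_comp]

lemma poch_nonneg {d : ℝ} (hd : 0 ≤ d) (n : ℕ) : 0 ≤ (ascPochhammer ℝ n).eval d := by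
  induction n with
  | zero => simp
  | succ n ih => rw [poch_succ]; exact mul_nonneg ih (by positivity)

lemma poch_abs_le (c : ℝ) (n : ℕ) :
    |(ascPochhammer ℝ n).eval c| ≤ (ascPochhammer ℝ n).eval |c| := by
  induction n with
  | zero => simp
  | succ n ih =>
    rw [poch_succ, poch_succ, abs_mul]
    refine mul_le_mul ih ((abs_add_le _ _).trans ?_) (abs_nonneg _) (poch_nonneg (abs_nonneg c) n)
    simp

lemma summable_poch {e x : ℝ} (he : 0 ≤ e) (hx0 : 0 ≤ x) (hx : x < 1) :
    Summable fun n : ℕ => (ascPochhammer ℝ n).eval e * x ^ n / (Nat.factorial n : ℝ) := by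
  set f : ℕ → ℝ := fun n => (ascPochhammer ℝ n).eval e * x ^ n / (Nat.factorial n : ℝ) with hf
  have hfnn : ∀ n, 0 ≤ f n := fun n => by
    apply div_nonneg (mul_nonneg (poch_nonneg he n) (pow_nonneg hx0 n)) (by positivity)
  set l : ℝ := (x + 1) / 2 with hl
  have hxl : x < l := by rw [hl]; linarith
  have hl1 : l < 1 := by rw [hl]; linarith
  apply summable_of_ratio_norm_eventually_le hl1
  obtain ⟨N, hN⟩ := exists_nat_ge ((x * e - l) / (l - x))
  filter_upwards [eventually_ge_atTop N] with n hn
  have hnN : ((x * e - l) / (l - x)) ≤ (n : ℝ) := hN.trans (by exact_mod_cast hn)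
  have hkey : x * (e + n) ≤ l * (n + 1) := by
    have h1 : x * e - l ≤ (l - x) * n := by
      rw [div_le_iff₀ (by linarith : (0:ℝ) < l - x)] at hnN; linarith [hnN]
    nlinarith
  have hrec : f (n + 1) = f n * (x * (e + n) / (n + 1)) := by
    rw [hf]
    simp only [poch_succ, Nat.factorial_succ, pow_succ, Nat.cast_mul, Nat.cast_add, Nat.cast_one]
    field_simp
  rw [Real.norm_of_nonneg (hfnn _), Real.norm_of_nonneg (hfnn _), hrec]
  have h2 : x * (e + n) / (n + 1) ≤ l := by
    rw [div_le_iff₀ (by positivity : (0:ℝ) < (n:ℝ) + 1)]; linarith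
  calc f n * (x * (e + n) / (n + 1)) ≤ f n * l :=
        mul_le_mul_of_nonneg_left h2 (hfnn n)
    _ = l * f n := mul_comm _ _

lemma summable_poch_abs (c : ℝ) {y : ℝ} (hy : |y| < 1) :
    Summable fun n : ℕ => (ascPochhammer ℝ n).eval c / (Nat.factorial n : ℝ) * y ^ n := by
  apply Summable.of_norm_bounded (summable_poch (abs_nonneg c) (abs_nonneg y) hy)
  intro n
  rw [norm_mul, norm_div, norm_pow, Real.norm_eq_abs, Real.norm_eq_abs, Real.norm_eq_abs,
    Nat.abs_cast, div_mul_eq_mul_div]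
  gcongr
  exact poch_abs_le c n

lemma summable_deriv_aux (c : ℝ) {y : ℝ} (h0 : 0 ≤ y) (hy : y < 1) :
    Summable (fun n : ℕ =>
      |(ascPochhammer ℝ n).eval c| / (Nat.factorial n : ℝ) * (n * y ^ (n-1))) := by
  rw [← summable_nat_add_iff 1]
  apply Summable.of_nonneg_of_le
    (fun n => by positivity)
    (fun n => ?_)
    ((summable_poch (by positivity : (0:ℝ) ≤ |c| + 1) h0 hy).mul_left |c|)
  have hfact : ((n+1).factorial : ℝ) = (n.factorial : ℝ) * (n+1) := by
    rw [Nat.factorial_succ]; push_cast; ring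
  have h1 : |(ascPochhammer ℝ (n+1)).eval c| ≤ |c| * (ascPochhammer ℝ n).eval (|c| + 1) := by
    calc |(ascPochhammer ℝ (n+1)).eval c| ≤ (ascPochhammer ℝ (n+1)).eval |c| := poch_abs_le c (n+1)
      _ = |c| * (ascPochhammer ℝ n).eval (|c| + 1) := poch_succ_left |c| n
  have hsimp : |(ascPochhammer ℝ (n+1)).eval c| / ((n+1).factorial : ℝ) * ((n+1 : ℕ) * y ^ (n+1-1))
      = |(ascPochhammer ℝ (n+1)).eval c| * y ^ n / (n.factorial : ℝ) := by
    rw [hfact]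
    push_cast
    field_simp
  rw [hsimp]
  calc |(ascPochhammer ℝ (n+1)).eval c| * y ^ n / (n.factorial : ℝ)
      ≤ (|c| * (ascPochhammer ℝ n).eval (|c| + 1)) * y ^ n / (n.factorial : ℝ) := by
        gcongr
    _ = |c| * ((ascPochhammer ℝ n).eval (|c| + 1) * y ^ n / (n.factorial : ℝ)) := by ring

lemma binomial_tsum (c : ℝ) {x : ℝ} (hx : |x| < 1) :
    ∑' n : ℕ, (ascPochhammer ℝ n).eval c * x ^ n / (Nat.factorial n : ℝ) = (1 - x) ^ (-c) := by
  set a : ℕ → ℝ := fun n => (ascPochhammer ℝ n).eval c / (Nat.factorial n : ℝ) with ha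
  set F : ℝ → ℝ := fun y => ∑' n : ℕ, a n * y ^ n with hF
  set r : ℝ := (|x| + 1) / 2 with hr
  have hxr : |x| < r := by rw [hr]; linarith
  have hr1 : r < 1 := by rw [hr]; linarith
  have hr0 : 0 < r := lt_of_le_of_lt (abs_nonneg x) hxr
  set t : Set ℝ := Ioo (-r) r with ht
  have hmem : ∀ y ∈ t, |y| < r := fun y hy => abs_lt.2 ⟨hy.1, hy.2⟩
  have hx_t : x ∈ t := by rw [ht]; exact ⟨neg_lt_of_abs_lt hxr, lt_of_abs_lt hxr⟩
  have h0_t : (0:ℝ) ∈ t := ⟨by linarith, hr0⟩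
  -- summable bounds
  set u : ℕ → ℝ := fun n => |(ascPochhammer ℝ n).eval c| / (Nat.factorial n : ℝ) * (n * r ^ (n-1))
    with hu
  have hu_sum : Summable u := summable_deriv_aux c hr0.le hr1
  have hbound : ∀ (n : ℕ), ∀ y ∈ t, ‖a n * (n * y ^ (n-1))‖ ≤ u n := by
    intro n y hy
    have e1 : ‖a n * ((n:ℝ) * y ^ (n-1))‖
        = |(ascPochhammer ℝ n).eval c| / (Nat.factorial n : ℝ) * ((n:ℝ) * |y| ^ (n-1)) := by
      rw [norm_mul, norm_mul, norm_pow]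
      simp only [Real.norm_eq_abs, Nat.abs_cast, ha, abs_div]
    have e2 : u n = |(ascPochhammer ℝ n).eval c| / (Nat.factorial n : ℝ) * ((n:ℝ) * r ^ (n-1)) :=
      rfl
    rw [e1, e2]
    gcongr
    exact (hmem y hy).le
  have hsD : ∀ y ∈ t, Summable (fun n : ℕ => a n * (n * y ^ (n-1))) := fun y hy =>
    Summable.of_norm_bounded hu_sum (fun n => hbound n y hy)
  have hsF : ∀ y : ℝ, |y| < 1 → Summable (fun n : ℕ => a n * y ^ n) := fun y hy =>
    summable_poch_abs c hy
  -- derivative of F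
  have hG0 : Summable fun n : ℕ => a n * (0:ℝ) ^ n := by
    apply summable_of_ne_finset_zero (s := {0})
    intro n hn
    simp only [Finset.mem_singleton] at hn
    rw [zero_pow hn, mul_zero]
  have hderivF : ∀ y ∈ t, HasDerivAt F (∑' n : ℕ, a n * (n * y ^ (n-1))) y := by
    intro y hy
    exact hasDerivAt_tsum_of_isPreconnected hu_sum isOpen_Ioo (convex_Ioo _ _).isPreconnected
      (fun n z hz => (hasDerivAt_pow n z).const_mul (a n)) hbound h0_t hG0 hy
  set D : ℝ → ℝ := fun y => ∑' n : ℕ, a n * (n * y ^ (n-1)) with hD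
  -- the ODE
  have key : ∀ y ∈ t, (1 - y) * D y = c * F y := by
    intro y hy
    have hy1 : |y| < 1 := (hmem y hy).trans hr1
    have h1 : y * D y = ∑' n : ℕ, (a n * n) * y ^ n := by
      rw [hD, ← tsum_mul_left]
      refine tsum_congr fun n => ?_
      cases n with
      | zero => simp
      | succ m => rw [Nat.add_sub_cancel]; ring
    have h2 : c * F y = ∑' n : ℕ, (c * a n) * y ^ n := by
      rw [hF, ← tsum_mul_left]
      exact tsum_congr fun n => by ring
    have hs1 : Summable (fun n : ℕ => (a n * n) * y ^ n) := by
      apply Summable.congr ((hsD y hy).mul_left y)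
      intro n
      cases n with
      | zero => simp
      | succ m => rw [Nat.add_sub_cancel]; ring
    have hs2 : Summable (fun n : ℕ => (c * a n) * y ^ n) := by
      apply Summable.congr ((hsF y hy1).mul_left c)
      intro n; ring
    have hshift : D y = ∑' n : ℕ, ((a n * n) * y ^ n + (c * a n) * y ^ n) := by
      have hDy : D y = ∑' n : ℕ, a n * ((n:ℝ) * y ^ (n-1)) := rfl
      rw [hDy, Summable.tsum_eq_zero_add (hsD y hy)]
      have : a 0 * ((0:ℕ) * y ^ (0-1)) = 0 := by simp
      rw [this, zero_add]
      refine tsum_congr fun n => ?_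
      rw [Nat.add_sub_cancel]
      have hpoch : a (n+1) * (n+1 : ℕ) = a n * (c + n) := by
        rw [ha]
        simp only [poch_succ, Nat.factorial_succ]
        push_cast
        have hne : ((n.factorial : ℝ)) ≠ 0 := Nat.cast_ne_zero.2 (Nat.factorial_ne_zero n)
        field_simp
      have : a (n+1) * ((n+1 : ℕ) * y ^ n) = (a (n+1) * (n+1 : ℕ)) * y ^ n := by push_cast; ring
      rw [this, hpoch]
      ring
    have := hshift.trans (Summable.tsum_add hs1 hs2)
    rw [← h1, ← h2] at this
    linear_combination this
  -- G is constant
  set G : ℝ → ℝ := fun y => (1 - y) ^ c * F y with hG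
  have hGderiv : ∀ y ∈ t, HasDerivAt G 0 y := by
    intro y hy
    have hy1 : 0 < 1 - y := by have := (hmem y hy).trans hr1; rw [abs_lt] at this; linarith
    have h1 : HasDerivAt (fun z : ℝ => (1 - z) ^ c) (c * (1 - y) ^ (c - 1) * (-1)) y := by
      have hd : HasDerivAt (fun z : ℝ => 1 - z) (-1) y := by
        simpa using (hasDerivAt_id y).const_sub 1
      have h := hd.rpow_const (p := c) (Or.inl hy1.ne')
      convert h using 1
      ring
    have h2 := (h1.mul (hderivF y hy))
    convert (show HasDerivAt G _ y from h2) using 1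
    have hsplit : (1 - y) ^ c = (1 - y) ^ (c - 1) * (1 - y) := by
      rw [← Real.rpow_add_one hy1.ne']; ring_nf
    rw [hsplit]
    have := key y hy
    change (0:ℝ) = c * (1 - y) ^ (c - 1) * (-1) * F y + (1 - y) ^ (c-1) * (1 - y) * D y
    linear_combination (-((1 - y) ^ (c - 1))) * this
  have hconst : G x = G 0 := by
    apply (convex_Ioo (-r) r).is_const_of_fderivWithin_eq_zero
      (fun y hy => ((hGderiv y hy).differentiableAt).differentiableWithinAt)
      (fun y hy => ?_) hx_t h0_t
    rw [fderivWithin_of_isOpen isOpen_Ioo hy]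
    have h := (hGderiv y hy).hasFDerivAt
    rw [show (ContinuousLinearMap.toSpanSingleton ℝ (0:ℝ)) = 0 by ext; simp] at h
    exact h.fderiv
  have hF0 : F 0 = 1 := by
    have hFy : F 0 = ∑' n : ℕ, a n * (0:ℝ) ^ n := rfl
    rw [hFy, tsum_eq_single 0 (fun n hn => by rw [zero_pow hn, mul_zero])]
    simp [ha]
  have hG0' : G 0 = 1 := by rw [hG]; simp [hF0]
  have h1x : 0 < 1 - x := by rw [abs_lt] at hx; linarith
  have hGx : (1 - x) ^ c * F x = 1 := hconst.trans hG0'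
  have hFx : F x = (1 - x) ^ (-c) := by
    rw [Real.rpow_neg h1x.le]
    have hne : (1 - x) ^ c ≠ 0 := by positivity
    field_simp
    linear_combination hGx
  rw [← hFx]
  have hFy : F x = ∑' n : ℕ, a n * x ^ n := rfl
  rw [hFy]
  refine tsum_congr fun n => ?_
  simp only [ha]
  ring


/-- Prabhakar generalized Mittag-Leffler function `M^c_{a,b}(z)`. -/
noncomputable def prabhakar (a b c z : ℝ) : ℝ :=
  ∑' n : ℕ, (ascPochhammer ℝ n).eval c * z ^ n / (Real.Gamma (a * n + b) * Nat.factorial n)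

theorem laplace_prabhakar (a b c η : ℝ) (ha : 0 < a) (hb : 0 < b) :
    ∃ S : ℝ, ∀ s : ℝ, S < s →
      ∫ t in Set.Ioi (0 : ℝ),
          Real.exp (-s * t) * t ^ (b - 1) * prabhakar a b c (-η * t ^ a)
        = s ^ (a * c - b) / (s ^ a + η) ^ c := by
  refine ⟨max 1 ((1 + |η|) ^ a⁻¹), fun s hs => ?_⟩
  have hs1 : (1:ℝ) < s := lt_of_le_of_lt (le_max_left _ _) hs
  have hs0 : (0:ℝ) < s := lt_trans one_pos hs1
  have hsa0 : (0:ℝ) < s ^ a := Real.rpow_pos_of_pos hs0 a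
  have hsa : 1 + |η| < s ^ a := by
    have h1 : (1 + |η|) ^ a⁻¹ < s := lt_of_le_of_lt (le_max_right _ _) hs
    calc 1 + |η| = ((1 + |η|) ^ a⁻¹) ^ a := by
          rw [← Real.rpow_mul (by positivity), inv_mul_cancel₀ ha.ne', Real.rpow_one]
      _ < s ^ a := Real.rpow_lt_rpow (by positivity) h1 ha
  have hη : |η| < s ^ a := by linarith
  have hx0 : (0:ℝ) ≤ |η| / s ^ a := by positivity
  have hx1 : |η| / s ^ a < 1 := (div_lt_one hsa0).2 hη
  have hzabs : |(-η) / s ^ a| < 1 := by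
    rw [abs_div, abs_neg, abs_of_pos hsa0]; exact hx1
  have hp : ∀ n : ℕ, (0:ℝ) < a * n + b := fun n => by positivity
  have hΓ : ∀ n : ℕ, (0:ℝ) < Real.Gamma (a * n + b) := fun n => Real.Gamma_pos_of_pos (hp n)
  set k : ℕ → ℝ := fun n =>
    (ascPochhammer ℝ n).eval c * (-η) ^ n / (Real.Gamma (a * n + b) * Nat.factorial n) with hk
  set F : ℕ → ℝ → ℝ := fun n t => k n * (t ^ (a * n + b - 1) * Real.exp (-(s * t))) with hFdef
  -- power lemma
  have hsan : ∀ n : ℕ, s ^ (a * n) = (s ^ a) ^ n := fun n => by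
    rw [Real.rpow_mul hs0.le, Real.rpow_natCast]
  have powlem : ∀ (w : ℝ) (n : ℕ), (1 / s) ^ (a * n + b) * w ^ n = (w / s ^ a) ^ n * s ^ (-b) := by
    intro w n
    have h1 : ((s:ℝ) ^ a) ^ n ≠ 0 := pow_ne_zero _ hsa0.ne'
    have h2 : s ^ b ≠ 0 := (Real.rpow_pos_of_pos hs0 b).ne'
    rw [one_div, Real.inv_rpow hs0.le, Real.rpow_add hs0, hsan n, Real.rpow_neg hs0.le, div_pow]
    field_simp
  have cancel : ∀ (P w : ℝ) (n : ℕ),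
      (P * w ^ n / (Real.Gamma (a * n + b) * Nat.factorial n)) *
        ((1 / s) ^ (a * n + b) * Real.Gamma (a * n + b))
      = P / Nat.factorial n * ((w / s ^ a) ^ n * s ^ (-b)) := by
    intro P w n
    have hΓn : Real.Gamma (a * n + b) ≠ 0 := (hΓ n).ne'
    calc (P * w ^ n / (Real.Gamma (a * n + b) * Nat.factorial n)) *
          ((1 / s) ^ (a * n + b) * Real.Gamma (a * n + b))
        = P / Nat.factorial n * ((1 / s) ^ (a * n + b) * w ^ n) *
            (Real.Gamma (a * n + b) / Real.Gamma (a * n + b)) := by ring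
      _ = P / Nat.factorial n * ((1 / s) ^ (a * n + b) * w ^ n) := by
          rw [div_self hΓn, mul_one]
      _ = P / Nat.factorial n * ((w / s ^ a) ^ n * s ^ (-b)) := by rw [powlem]
  -- integrability
  have hint : ∀ n : ℕ, IntegrableOn
      (fun t : ℝ => t ^ (a * n + b - 1) * Real.exp (-(s * t))) (Ioi 0) := by
    intro n
    have h0 : IntegrableOn (fun u : ℝ => u ^ (a * n + b - 1) * Real.exp (-u)) (Ioi 0) :=
      (Real.GammaIntegral_convergent (hp n)).congr_fun
        (fun u _ => by exact mul_comm _ _) measurableSet_Ioi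
    have h1 : IntegrableOn (fun t : ℝ => (s * t) ^ (a * n + b - 1) * Real.exp (-(s * t)))
        (Ioi 0) := by
      have := (integrableOn_Ioi_comp_mul_left_iff
        (fun u : ℝ => u ^ (a * n + b - 1) * Real.exp (-u)) 0 hs0).2 (by simpa using h0)
      simpa using this
    refine IntegrableOn.congr_fun (h1.const_mul ((s ^ (a * n + b - 1))⁻¹))
      (fun t ht => ?_) measurableSet_Ioi
    rw [mem_Ioi] at ht
    have h2 : (s:ℝ) ^ (a * n + b - 1) ≠ 0 := (Real.rpow_pos_of_pos hs0 _).ne'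
    rw [Real.mul_rpow hs0.le ht.le]
    field_simp
  have hFint : ∀ n : ℕ, IntegrableOn (F n) (Ioi 0) := fun n => (hint n).const_mul (k n)
  -- value of the integrals
  have hval : ∀ n : ℕ, ∫ t in Ioi 0, t ^ (a * n + b - 1) * Real.exp (-(s * t))
      = (1 / s) ^ (a * n + b) * Real.Gamma (a * n + b) := fun n =>
    integral_rpow_mul_exp_neg_mul_Ioi (hp n) hs0
  have hnorm : ∀ n : ℕ, ∫ t in Ioi 0, ‖F n t‖
      = |k n| * ((1 / s) ^ (a * n + b) * Real.Gamma (a * n + b)) := by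
    intro n
    rw [← hval n, ← integral_const_mul]
    refine setIntegral_congr_fun measurableSet_Ioi (fun t ht => ?_)
    rw [mem_Ioi] at ht
    simp only [hFdef, norm_mul, Real.norm_eq_abs,
      abs_of_pos (Real.exp_pos _), abs_of_nonneg (Real.rpow_nonneg ht.le _)]
  have habsk : ∀ n : ℕ, |k n|
      = |(ascPochhammer ℝ n).eval c| * |η| ^ n /
        (Real.Gamma (a * n + b) * Nat.factorial n) := by
    intro n
    simp only [hk]
    rw [abs_div, abs_mul, abs_mul, abs_pow, abs_neg, abs_of_pos (hΓ n),
      abs_of_nonneg (by positivity : (0:ℝ) ≤ (Nat.factorial n : ℝ))]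
  -- summability of the integrals of norms
  have hsumnorm : Summable (fun n : ℕ => ∫ t in Ioi 0, ‖F n t‖) := by
    apply Summable.of_nonneg_of_le (fun n => integral_nonneg fun t => norm_nonneg _) (fun n => ?_)
      ((summable_poch (abs_nonneg c) hx0 hx1).mul_right (s ^ (-b)))
    rw [hnorm n, habsk n, cancel]
    have e2 : (ascPochhammer ℝ n).eval |c| * (|η| / s ^ a) ^ n / (Nat.factorial n) * s ^ (-b)
        = (ascPochhammer ℝ n).eval |c| / Nat.factorial n * ((|η| / s ^ a) ^ n * s ^ (-b)) := by
      ring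
    rw [e2]
    have hnn : (0:ℝ) ≤ (|η| / s ^ a) ^ n * s ^ (-b) := by positivity
    have hf : (0:ℝ) < (Nat.factorial n : ℝ) := by positivity
    gcongr
    exact poch_abs_le c n
  -- Step 1: rewrite the integrand as a tsum
  have step1 : ∫ t in Set.Ioi (0:ℝ),
      Real.exp (-s * t) * t ^ (b - 1) * prabhakar a b c (-η * t ^ a)
      = ∫ t in Set.Ioi (0:ℝ), ∑' n : ℕ, F n t := by
    refine setIntegral_congr_fun measurableSet_Ioi (fun t ht => ?_)
    rw [mem_Ioi] at ht
    rw [prabhakar, ← tsum_mul_left]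
    refine tsum_congr fun n => ?_
    simp only [hFdef, hk]
    have h1 : (-η * t ^ a) ^ n = (-η) ^ n * (t ^ a) ^ n := mul_pow _ _ _
    have h2 : (t ^ a) ^ n = t ^ (a * n) := by
      rw [← Real.rpow_natCast (t ^ a) n, ← Real.rpow_mul ht.le]
    have h3 : t ^ (b - 1) * t ^ (a * n) = t ^ (a * n + b - 1) := by
      rw [← Real.rpow_add ht]; ring_nf
    have h4 : Real.exp (-s * t) = Real.exp (-(s * t)) := by rw [neg_mul]
    rw [h1, h2, h4]
    calc Real.exp (-(s*t)) * t ^ (b-1) *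
          ((ascPochhammer ℝ n).eval c * ((-η)^n * t ^ (a*n)) /
            (Real.Gamma (a*n+b) * Nat.factorial n))
        = (ascPochhammer ℝ n).eval c * (-η)^n / (Real.Gamma (a*n+b) * Nat.factorial n) *
            (t ^ (b-1) * t ^ (a*n) * Real.exp (-(s*t))) := by ring
      _ = _ := by rw [h3]
  -- Step 2: swap integral and sum
  have step2 : ∫ t in Set.Ioi (0:ℝ), ∑' n : ℕ, F n t = ∑' n : ℕ, ∫ t in Set.Ioi (0:ℝ), F n t :=
    (integral_tsum_of_summable_integral_norm hFint hsumnorm).symm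
  -- Step 3: compute the sum
  have step3 : ∑' n : ℕ, ∫ t in Set.Ioi (0:ℝ), F n t
      = (∑' n : ℕ, (ascPochhammer ℝ n).eval c * ((-η) / s ^ a) ^ n / (Nat.factorial n)) *
          s ^ (-b) := by
    rw [← tsum_mul_right]
    refine tsum_congr fun n => ?_
    have : ∫ t in Set.Ioi (0:ℝ), F n t
        = k n * ((1 / s) ^ (a * n + b) * Real.Gamma (a * n + b)) := by
      simp only [hFdef]
      rw [integral_const_mul, hval n]
    rw [this, hk]
    rw [cancel ((ascPochhammer ℝ n).eval c) (-η) n]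
    ring
  rw [step1, step2, step3, binomial_tsum c hzabs]
  -- final algebra
  have hpos : (0:ℝ) < s ^ a + η := by
    have := abs_lt.1 hη
    linarith [this.1]
  have h1z : 1 - (-η) / s ^ a = (s ^ a + η) / s ^ a := by field_simp; ring
  rw [h1z, Real.div_rpow hpos.le hsa0.le, ← Real.rpow_mul hs0.le]
  have e3 : a * (-c) = -(a * c) := by ring
  rw [e3, Real.rpow_neg hpos.le, Real.rpow_neg hs0.le (a*c), Real.rpow_neg hs0.le b,
    show a * c - b = a * c + -b from sub_eq_add_neg _ _, Real.rpow_add hs0,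
    Real.rpow_neg hs0.le b]
  have hX : ((s ^ a + η) ^ c) ≠ 0 := (Real.rpow_pos_of_pos hpos c).ne'
  have hY : (s ^ (a*c)) ≠ 0 := (Real.rpow_pos_of_pos hs0 _).ne'
  have hZ : (s ^ b) ≠ 0 := (Real.rpow_pos_of_pos hs0 _).ne'
  field_simp

end PrabhakarAux
end

section
/- For β ∈ (0,1] and λ > 0, the time-fractional Poisson PMF P_β(k,t) = ((λt^β)^k / k!) Σ_{r=0}^{∞} ((k+r)!/r!) (−λt^β)^r / Γ(β(k+r)+1) satisfies Σ_{k=0}^{∞} P_β(k,t) u^k = E_{β,1}(λ t^β (u−1)) for |u| ≤ 1. -/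
open Real Filter Finset

lemma gamma_conv (β x : ℝ) (hβ0 : 0 < β) (hβ1 : β ≤ 1) (hx : 0 < x) :
    Real.Gamma (x + 1) ≤ Real.Gamma (x + β) * (x + β) ^ (1 - β) := by
  have hxβ : 0 < x + β := by linarith
  have h := Real.convexOn_log_Gamma.2 (Set.mem_Ioi.mpr hxβ)
    (Set.mem_Ioi.mpr (by linarith : (0:ℝ) < x + β + 1)) hβ0.le (by linarith : (0:ℝ) ≤ 1 - β)
    (by ring)
  have harg : β • (x + β) + (1 - β) • (x + β + 1) = x + 1 := by
    simp [smul_eq_mul]; ring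
  rw [harg] at h
  simp only [Function.comp_apply, smul_eq_mul] at h
  rw [Real.Gamma_add_one hxβ.ne', Real.log_mul hxβ.ne' (Real.Gamma_pos_of_pos hxβ).ne'] at h
  have h2 : Real.log (Real.Gamma (x + 1)) ≤
      Real.log (Real.Gamma (x + β) * (x + β) ^ (1 - β)) := by
    rw [Real.log_mul (Real.Gamma_pos_of_pos hxβ).ne' (Real.rpow_pos_of_pos hxβ _).ne',
      Real.log_rpow hxβ]
    nlinarith [h]
  exact (Real.log_le_log_iff (Real.Gamma_pos_of_pos (by linarith))
    (by positivity)).mp h2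

lemma ML_summable (β : ℝ) (hβ0 : 0 < β) (hβ1 : β ≤ 1) (y : ℝ) :
    Summable (fun n : ℕ => y ^ n / Real.Gamma (β * n + 1)) := by
  have hpos : ∀ n : ℕ, 0 < Real.Gamma (β * n + 1) := fun n =>
    Real.Gamma_pos_of_pos (by positivity)
  refine summable_of_ratio_norm_eventually_le (r := 1/2) (by norm_num) ?_
  -- eventually (β*n+1)^β ≥ 4*|y|+1
  have htend : Tendsto (fun n : ℕ => (β * n + 1) ^ β) atTop atTop := by
    exact (tendsto_rpow_atTop hβ0).comp
      (tendsto_atTop_add_const_right _ 1 (Tendsto.const_mul_atTop hβ0 tendsto_natCast_atTop_atTop))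
  filter_upwards [htend.eventually_ge_atTop (4 * |y| + 1)] with n hn
  have hx : (0:ℝ) < β * n + 1 := by positivity
  have h1 : (1:ℝ) ≤ β * n + 1 := by nlinarith [mul_nonneg hβ0.le (Nat.cast_nonneg n)]
  have key := gamma_conv β (β * n + 1) hβ0 hβ1 hx
  -- Gamma (β*(n+1)+1) = Gamma (β*n+1+β)
  have harg : β * (n + 1 : ℕ) + 1 = (β * n + 1) + β := by push_cast; ring
  -- bound (x+β)^(1-β) ≤ 2 * x^(1-β) where x = β*n+1, since x+β ≤ 2x
  set x := β * n + 1 with hxdef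
  have hxβ : (0:ℝ) < x + β := by positivity
  have hb1 : (x + β) ^ (1 - β) ≤ (2 * x) ^ (1 - β) := by
    apply Real.rpow_le_rpow hxβ.le (by linarith) (by linarith)
  have hb2 : (2 * x) ^ (1 - β) ≤ 2 * x ^ (1 - β) := by
    rw [Real.mul_rpow (by norm_num) hx.le]
    gcongr
    calc (2:ℝ) ^ (1 - β) ≤ 2 ^ (1:ℝ) := by
          apply Real.rpow_le_rpow_of_exponent_le (by norm_num) (by linarith)
      _ = 2 := by norm_num
  have hb3 : x ^ (1 - β) = x / x ^ β := by
    rw [Real.rpow_sub hx, Real.rpow_one]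
  -- Gamma (x+1) = x * Gamma x
  have hG1 : Real.Gamma (x + 1) = x * Real.Gamma x := Real.Gamma_add_one hx.ne'
  have hGx : 0 < Real.Gamma x := Real.Gamma_pos_of_pos hx
  have hGxβ : 0 < Real.Gamma (x + β) := Real.Gamma_pos_of_pos hxβ
  -- x * Gamma x ≤ Gamma (x+β) * (2 * x / x^β)
  have hmain : x * Real.Gamma x ≤ Real.Gamma (x + β) * (2 * (x / x ^ β)) := by
    rw [← hG1]
    calc Real.Gamma (x + 1) ≤ Real.Gamma (x + β) * ((x + β) ^ (1 - β)) := key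
      _ ≤ Real.Gamma (x + β) * (2 * (x / x ^ β)) := by
          rw [← hb3]; exact mul_le_mul_of_nonneg_left (hb1.trans hb2) hGxβ.le
  -- hence Gamma (x + β) ≥ x^β * Gamma x / 2
  have hxb : (0:ℝ) < x ^ β := Real.rpow_pos_of_pos hx β
  have hge : x ^ β * Real.Gamma x ≤ 2 * Real.Gamma (x + β) := by
    have hne : x ^ β ≠ 0 := hxb.ne'
    have hmain' : x * Real.Gamma x * x ^ β ≤ Real.Gamma (x + β) * 2 * x := by
      have h := mul_le_mul_of_nonneg_right hmain hxb.le
      have heq : Real.Gamma (x + β) * (2 * (x / x ^ β)) * x ^ β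
          = Real.Gamma (x + β) * 2 * x := by field_simp
      linarith [heq ▸ h]
    exact le_of_mul_le_mul_right (by linarith [hmain']) hx
  -- now norms
  rw [Real.norm_eq_abs, Real.norm_eq_abs, abs_div, abs_div,
    abs_of_pos (hpos (n+1)), abs_of_pos (hpos n), abs_pow, abs_pow]
  rw [show β * ((n:ℕ)+1 : ℕ) + 1 = x + β by rw [hxdef]; push_cast; ring]
  rw [div_le_iff₀ (Real.Gamma_pos_of_pos hxβ), pow_succ]
  have hy4 : |y| ≤ x ^ β / 4 := by linarith
  have hkey : |y| * Real.Gamma x ≤ 1/2 * Real.Gamma (x + β) := by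
    have h5 := mul_le_mul_of_nonneg_right hy4 hGx.le
    nlinarith [hge, hGx, hxb]
  calc |y| ^ n * |y| = |y| ^ n * (|y| * Real.Gamma x) / Real.Gamma x := by
        field_simp
    _ ≤ |y| ^ n * (1/2 * Real.Gamma (x + β)) / Real.Gamma x := by gcongr
    _ = 1/2 * (|y| ^ n / Real.Gamma x) * Real.Gamma (x + β) := by ring


/-- PMF of the time-fractional Poisson process. -/
noncomputable def tfppPMF (lam β : ℝ) (k : ℕ) (t : ℝ) : ℝ :=
  ((lam * t ^ β) ^ k / (Nat.factorial k)) *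
    ∑' r : ℕ, ((Nat.factorial (k + r) : ℝ) / (Nat.factorial r)) *
      (-(lam * t ^ β)) ^ r / Real.Gamma (β * (k + r) + 1)

set_option maxHeartbeats 1000000 in
theorem tfpp_pgf (β lam t u : ℝ) (hβ0 : 0 < β) (hβ1 : β ≤ 1) (hlam : 0 < lam)
    (ht : 0 ≤ t) (hu : |u| ≤ 1) :
    ∑' k : ℕ, tfppPMF lam β k t * u ^ k
      = ∑' n : ℕ, (lam * t ^ β * (u - 1)) ^ n / Real.Gamma (β * n + 1) := by
  set x : ℝ := lam * t ^ β with hxdef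
  have hx0 : 0 ≤ x := by positivity
  have hG : ∀ n : ℕ, 0 < Real.Gamma (β * n + 1) := fun n =>
    Real.Gamma_pos_of_pos (by positivity)
  set G : ℕ × ℕ → ℝ := fun p =>
    (((p.1 + p.2).choose p.1 : ℕ) : ℝ) * x ^ (p.1 + p.2)
      / Real.Gamma (β * (p.1 + p.2) + 1) with hGdef
  set g : ℕ × ℕ → ℝ := fun p => G p * u ^ p.1 * (-1 : ℝ) ^ p.2 with hgdef
  have hGnonneg : ∀ p, 0 ≤ G p := by
    intro p
    have := (hG (p.1 + p.2)).le
    positivity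
  set e := Finset.HasAntidiagonal.sigmaAntidiagonalEquivProd (A := ℕ) with hedef
  -- fiber sums of G
  have hfiber : ∀ n : ℕ, ∑' (p : (antidiagonal n : Finset (ℕ × ℕ))), G (e ⟨n, p⟩)
      = (2 * x) ^ n / Real.Gamma (β * n + 1) := by
    intro n
    rw [tsum_fintype]
    simp only [hedef, Finset.HasAntidiagonal.sigmaAntidiagonalEquivProd_apply]
    rw [Finset.sum_coe_sort (antidiagonal n) G]
    have hc : ∑ p ∈ antidiagonal n, G p
        = ∑ p ∈ antidiagonal n, ((n.choose p.1 : ℕ) : ℝ) * x ^ n / Real.Gamma (β * n + 1) := by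
      apply Finset.sum_congr rfl
      intro p hp
      rw [Finset.HasAntidiagonal.mem_antidiagonal] at hp
      have hcast : ((p.1 : ℝ) + p.2) = (n : ℝ) := by exact_mod_cast congrArg (Nat.cast (R := ℝ)) hp
      simp only [hGdef, hcast, hp]
    rw [hc, ← Finset.sum_div, ← Finset.sum_mul, Nat.sum_antidiagonal_eq_sum_range_succ_mk]
    congr 1
    conv_rhs => rw [mul_pow]
    congr 1
    have h2 : ((∑ k ∈ Finset.range (n+1), n.choose k : ℕ) : ℝ) = 2 ^ n := by
      exact_mod_cast congrArg (Nat.cast (R := ℝ)) (Nat.sum_range_choose n)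
    rw [← h2]
    push_cast
    rfl
  -- summability of G
  have hGsum : Summable G := by
    rw [← e.summable_iff, Function.comp_def,
      summable_sigma_of_nonneg (fun σ => hGnonneg _)]
    constructor
    · intro n; exact (hasSum_fintype _).summable
    · apply Summable.congr (ML_summable β hβ0 hβ1 (2 * x))
      intro n
      exact (hfiber n).symm
  -- summability of g
  have hgsum : Summable g := by
    apply Summable.of_norm_bounded hGsum
    intro p
    rw [hgdef]
    simp only [norm_mul, norm_pow, norm_neg, norm_one, one_pow, mul_one, Real.norm_eq_abs]
    calc |G p| * |u| ^ p.1 ≤ |G p| * 1 := by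
          apply mul_le_mul_of_nonneg_left _ (abs_nonneg _)
          exact pow_le_one₀ (abs_nonneg u) hu
      _ = G p := by rw [mul_one, abs_of_nonneg (hGnonneg p)]
  -- Step A: termwise identity
  have hstepA : ∀ k : ℕ, tfppPMF lam β k t * u ^ k = ∑' r : ℕ, g (k, r) := by
    intro k
    simp only [tfppPMF, ← hxdef]
    rw [show (x ^ k / (Nat.factorial k : ℝ)) *
        (∑' r : ℕ, ((Nat.factorial (k + r) : ℝ) / (Nat.factorial r)) *
          (-x) ^ r / Real.Gamma (β * (k + r) + 1)) * u ^ k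
      = ∑' r : ℕ, (x ^ k / (Nat.factorial k : ℝ) * u ^ k) *
          (((Nat.factorial (k + r) : ℝ) / (Nat.factorial r)) *
            (-x) ^ r / Real.Gamma (β * (k + r) + 1)) by rw [tsum_mul_left]; ring]
    apply tsum_congr
    intro r
    have hfac : (((k + r).choose k : ℕ) : ℝ) * (Nat.factorial k) * (Nat.factorial r)
        = ((k + r).factorial : ℝ) := by
      rw [Nat.choose_symm_add]
      exact_mod_cast congrArg (Nat.cast (R := ℝ)) (Nat.add_choose_mul_factorial_mul_factorial k r)
    have hk0 : (Nat.factorial k : ℝ) ≠ 0 := by positivity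
    have hr0 : (Nat.factorial r : ℝ) ≠ 0 := by positivity
    have hΓ0 : Real.Gamma (β * ((k : ℝ) + (r : ℝ)) + 1) ≠ 0 := by
      refine (Real.Gamma_pos_of_pos ?_).ne'
      positivity
    rw [hgdef]
    simp only [hGdef]
    rw [← hfac, neg_pow, pow_add]
    field_simp
  -- assemble
  calc ∑' k : ℕ, tfppPMF lam β k t * u ^ k
      = ∑' k : ℕ, ∑' r : ℕ, g (k, r) := tsum_congr hstepA
    _ = ∑' p : ℕ × ℕ, g p := (Summable.tsum_prod' hgsum fun k => hgsum.prod_factor k).symm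
    _ = ∑' σ : (Σ n : ℕ, (antidiagonal n : Finset (ℕ × ℕ))), g (e σ) := (e.tsum_eq g).symm
    _ = ∑' (n : ℕ) (p : (antidiagonal n : Finset (ℕ × ℕ))), g (e ⟨n, p⟩) :=
        Summable.tsum_sigma' (fun n => (hasSum_fintype _).summable) (e.summable_iff.mpr hgsum)
    _ = ∑' n : ℕ, x ^ n * (u - 1) ^ n / Real.Gamma (β * n + 1) := by
        apply tsum_congr
        intro n
        rw [tsum_fintype]
        simp only [hedef, Finset.HasAntidiagonal.sigmaAntidiagonalEquivProd_apply]
        rw [Finset.sum_coe_sort (antidiagonal n) g]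
        have hbin : ∑ p ∈ antidiagonal n, ((n.choose p.1 : ℕ) : ℝ) * (u ^ p.1 * (-1 : ℝ) ^ p.2)
            = (u - 1) ^ n := by
          rw [show (u - 1 : ℝ) = u + (-1) by ring, (Commute.all u (-1)).add_pow']
          simp [nsmul_eq_mul]
        have hc : ∑ p ∈ antidiagonal n, g p
            = ∑ p ∈ antidiagonal n,
                (x ^ n / Real.Gamma (β * n + 1)) *
                  (((n.choose p.1 : ℕ) : ℝ) * (u ^ p.1 * (-1 : ℝ) ^ p.2)) := by
          apply Finset.sum_congr rfl
          intro p hp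
          rw [Finset.HasAntidiagonal.mem_antidiagonal] at hp
          have hcast : ((p.1 : ℝ) + p.2) = (n : ℝ) := by
            exact_mod_cast congrArg (Nat.cast (R := ℝ)) hp
          simp only [hgdef, hGdef, hcast, hp]
          ring
        rw [hc, ← Finset.mul_sum, hbin]
        ring
    _ = ∑' n : ℕ, (x * (u - 1)) ^ n / Real.Gamma (β * n + 1) := by
        apply tsum_congr
        intro n
        conv_rhs => rw [mul_pow]
end
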